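/- Let $\mu \geq 1$ and $f : (0,1] \to [0,\infty)$ a measurable function. Suppose $\alpha, \beta \in [0,1)$ and there exist constants $a_1, a_2 > 0$ such that $f(t) \leq a_1 t^{-\alpha} + a_2 \int_0^t (t-s)^{-\beta} f(s)\, ds$ for all $t \in (0,1]$ and $f$ is integrable on $(0,1]$. Then there exists $C = C(\alpha, \beta, a_2) > 0$ such that $f(t) \leq C a_1 t^{-\alpha}$ for all $t \in (0,1]$. -/

import Mathlib

open MeasureTheory Real Set Filter

noncomputable def henryB (p q : ℝ) : ℝ := ∫ u in Set.Ioo (0:ℝ) 1, (1-u)^p * u^q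

lemma henryB_nonneg (p q : ℝ) : 0 ≤ henryB p q :=
  setIntegral_nonneg measurableSet_Ioo fun u hu =>
    mul_nonneg (rpow_nonneg (by linarith [hu.2]) _) (rpow_nonneg hu.1.le _)

lemma henry_meas (p q : ℝ) : Measurable fun u : ℝ => (1-u)^p * u^q :=
  ((measurable_const.sub measurable_id).pow measurable_const).mul
    (measurable_id.pow measurable_const)

lemma henryB_integrableOn {p q : ℝ} (hp : -1 < p) (hq : -1 < q) :
    IntegrableOn (fun u : ℝ => (1-u)^p * u^q) (Set.Ioo 0 1) volume := by
  have split : Set.Ioo (0:ℝ) 1 ⊆ Set.Ioc 0 2⁻¹ ∪ Set.Ioc 2⁻¹ 1 := by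
    intro x hx; rcases le_or_gt x 2⁻¹ with h | h
    · exact Or.inl ⟨hx.1, h⟩
    · exact Or.inr ⟨h, hx.2.le⟩
  refine IntegrableOn.mono_set (IntegrableOn.union ?_ ?_) split
  · have hq' : IntegrableOn (fun u : ℝ => u ^ q) (Set.Ioc 0 2⁻¹) volume := by
      have := intervalIntegral.intervalIntegrable_rpow' (a := 0) (b := 2⁻¹) hq
      rwa [intervalIntegrable_iff_integrableOn_Ioc_of_le (by norm_num)] at this
    set M : ℝ := max 1 (2⁻¹ ^ p) with hM
    refine Integrable.mono' (hq'.const_mul M) ((henry_meas p q).aestronglyMeasurable) ?_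
    refine ae_restrict_of_forall_mem measurableSet_Ioc fun u hu => ?_
    have h1u : (0:ℝ) < 1 - u := by have := hu.2; norm_num at this ⊢; linarith
    have hbound : (1-u)^p ≤ M := by
      rcases le_or_gt 0 p with hp0 | hp0
      · exact le_trans (rpow_le_one h1u.le (by linarith [hu.1]) hp0) (le_max_left _ _)
      · exact le_trans (rpow_le_rpow_of_nonpos (by norm_num) (by linarith [hu.2]) hp0.le)
          (le_max_right _ _)
    have hn : ‖(1-u)^p * u^q‖ = (1-u)^p * u^q := by
      rw [Real.norm_eq_abs, abs_of_nonneg (mul_nonneg (rpow_nonneg h1u.le _) (rpow_nonneg hu.1.le _))]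
    rw [hn]
    exact mul_le_mul_of_nonneg_right hbound (rpow_nonneg hu.1.le _)
  · have hp' : IntegrableOn (fun u : ℝ => (1-u) ^ p) (Set.Ioc 2⁻¹ 1) volume := by
      have h0 := intervalIntegral.intervalIntegrable_rpow' (a := 0) (b := 2⁻¹) hp
      have h1 := (h0.comp_sub_left (1:ℝ))
      -- fun x => (1 - x) ^ p on 1-0 .. 1-2⁻¹ = 1 .. 2⁻¹
      have h2 : IntervalIntegrable (fun x : ℝ => (1 - x) ^ p) volume 2⁻¹ 1 := by
        have h3 := h1.symm
        norm_num at h3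
        rwa [show (1:ℝ)/2 = 2⁻¹ by norm_num] at h3
      rwa [intervalIntegrable_iff_integrableOn_Ioc_of_le (by norm_num)] at h2
    set M : ℝ := max 1 (2⁻¹ ^ q) with hM
    refine Integrable.mono' (hp'.const_mul M) ((henry_meas p q).aestronglyMeasurable) ?_
    refine ae_restrict_of_forall_mem measurableSet_Ioc fun u hu => ?_
    have hu0 : (0:ℝ) < u := lt_trans (by norm_num) hu.1
    have h1u : (0:ℝ) ≤ 1 - u := by linarith [hu.2]
    have hbound : u^q ≤ M := by
      rcases le_or_gt 0 q with hq0 | hq0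
      · exact le_trans (rpow_le_one hu0.le hu.2 hq0) (le_max_left _ _)
      · exact le_trans (rpow_le_rpow_of_nonpos (by norm_num) hu.1.le hq0.le) (le_max_right _ _)
    have hn : ‖(1-u)^p * u^q‖ = (1-u)^p * u^q := by
      rw [Real.norm_eq_abs, abs_of_nonneg (mul_nonneg (rpow_nonneg h1u _) (rpow_nonneg hu0.le _))]
    rw [hn, mul_comm ((1-u)^p) (u^q)]
    exact mul_le_mul_of_nonneg_right hbound (rpow_nonneg h1u _)



lemma henry_beta {p q : ℝ} (hp : -1 < p) (hq : -1 < q) {r t : ℝ} (h : r < t) :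
    IntegrableOn (fun s : ℝ => (t-s)^p * (s-r)^q) (Set.Ioo r t) volume ∧
    ∫ s in Set.Ioo r t, (t-s)^p * (s-r)^q = (t-r)^(p+q+1) * henryB p q := by
  set c : ℝ := t - r with hc
  have hc0 : 0 < c := by simp [hc]; linarith
  have hg : IntervalIntegrable (fun u : ℝ => (1-u)^p * u^q) volume 0 1 := by
    rw [intervalIntegrable_iff_integrableOn_Ioc_of_le zero_le_one]
    exact (henryB_integrableOn hp hq).congr_set_ae Ioo_ae_eq_Ioc.symm
  -- key pointwise identity on Icc r t
  have key : ∀ s ∈ Set.Icc r t,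
      (t-s)^p * (s-r)^q = c^(p+q) * ((1 - (s-r) * c⁻¹)^p * ((s-r) * c⁻¹)^q) := by
    intro s hs
    have h1 : 1 - (s-r) * c⁻¹ = (t-s) * c⁻¹ := by
      field_simp
      ring
    have hcp : c ^ p ≠ 0 := (Real.rpow_pos_of_pos hc0 p).ne'
    have hcq : c ^ q ≠ 0 := (Real.rpow_pos_of_pos hc0 q).ne'
    rw [h1, Real.mul_rpow (by linarith [hs.2]) (by positivity),
      Real.mul_rpow (by linarith [hs.1]) (by positivity),
      ← Real.rpow_neg_one c, ← Real.rpow_mul hc0.le, ← Real.rpow_mul hc0.le,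
      show (-1:ℝ)*p = -p by ring, show (-1:ℝ)*q = -q by ring,
      Real.rpow_add hc0 p q, Real.rpow_neg hc0.le p, Real.rpow_neg hc0.le q]
    field_simp
  have hrt : r ≤ t := h.le
  -- integrability of the composed function on r..t
  have hcomp : IntervalIntegrable (fun s : ℝ => c^(p+q) * ((1 - (s-r) * c⁻¹)^p * ((s-r) * c⁻¹)^q))
      volume r t := by
    have h1 := hg.comp_mul_right (c := c⁻¹)
    have h2 := h1.comp_sub_right r
    norm_num [hc0.ne'] at h1 h2
    have h3 : IntervalIntegrable (fun s : ℝ => (1 - (s-r) * c⁻¹)^p * ((s-r) * c⁻¹)^q)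
        volume r t := by
      simpa [hc, div_eq_mul_inv] using h2
    exact h3.const_mul _
  have hII : IntervalIntegrable (fun s : ℝ => (t-s)^p * (s-r)^q) volume r t := by
    refine hcomp.congr ?_
    refine fun s hs => ?_
    rw [Set.uIoc_of_le hrt] at hs
    exact (key s ⟨hs.1.le, hs.2⟩).symm
  constructor
  · have h5 := (intervalIntegrable_iff_integrableOn_Ioc_of_le hrt).mp hII
    exact h5.mono_set Set.Ioo_subset_Ioc_self
  · rw [← MeasureTheory.integral_Ioc_eq_integral_Ioo,
      ← intervalIntegral.integral_of_le hrt,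
      intervalIntegral.integral_congr (g := fun s : ℝ => c^(p+q) * ((1 - (s-r) * c⁻¹)^p * ((s-r) * c⁻¹)^q)) (fun s hs => key s (by rwa [Set.uIcc_of_le hrt] at hs)),
      intervalIntegral.integral_const_mul]
    have sub1 : (∫ s in r..t, (1 - (s-r) * c⁻¹)^p * ((s-r) * c⁻¹)^q)
        = ∫ x in (0:ℝ)..c, (1 - x * c⁻¹)^p * (x * c⁻¹)^q := by
      have := intervalIntegral.integral_comp_sub_right
        (a := r) (b := t) (fun x : ℝ => (1 - x * c⁻¹)^p * (x * c⁻¹)^q) r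
      simpa [hc] using this
    have sub2 : (∫ x in (0:ℝ)..c, (1 - x * c⁻¹)^p * (x * c⁻¹)^q)
        = c • ∫ u in (0:ℝ)..1, (1-u)^p * u^q := by
      have := intervalIntegral.integral_comp_mul_right
        (a := 0) (b := c) (fun u : ℝ => (1-u)^p * u^q) (inv_ne_zero hc0.ne')
      rw [this]
      norm_num [hc0.ne']
    rw [sub1, sub2]
    have hBv : (∫ u in (0:ℝ)..1, (1-u)^p * u^q) = henryB p q := by
      rw [intervalIntegral.integral_of_le zero_le_one, MeasureTheory.integral_Ioc_eq_integral_Ioo]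
      rfl
    rw [hBv, smul_eq_mul, ← mul_assoc, ← Real.rpow_add_one hc0.ne' (p+q)]




lemma henry_betaLin {p q : ℝ} (hp : -1 < p) (hq : -1 < q) {r t : ℝ} (h : r < t) :
    ∫⁻ s in Set.Ioo r t, ENNReal.ofReal ((t-s)^p) * ENNReal.ofReal ((s-r)^q)
      = ENNReal.ofReal ((t-r)^(p+q+1) * henryB p q) := by
  obtain ⟨hint, hval⟩ := henry_beta hp hq h
  rw [← hval, ofReal_integral_eq_lintegral_ofReal hint
    (ae_restrict_of_forall_mem measurableSet_Ioo fun s hs =>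
      mul_nonneg (rpow_nonneg (by linarith [hs.2]) _) (rpow_nonneg (by linarith [hs.1]) _))]
  refine setLIntegral_congr_fun measurableSet_Ioo (fun s hs => ?_)
  rw [ENNReal.ofReal_mul (rpow_nonneg (by linarith [hs.2]) _)]

lemma henry_fubini {β : ℝ} (hβ : β < 1) {f : ℝ → ℝ} (hf : Measurable f)
    {p : ℝ} (hp : -1 < p) {t : ℝ} (ht : 0 < t) :
    ∫⁻ s in Set.Ioo 0 t, ENNReal.ofReal ((t-s)^p) *
        ∫⁻ r in Set.Ioo 0 s, ENNReal.ofReal ((s-r)^(-β)) * ENNReal.ofReal (f r)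
      = ENNReal.ofReal (henryB p (-β)) *
        ∫⁻ r in Set.Ioo 0 t, ENNReal.ofReal ((t-r)^(p+1-β)) * ENNReal.ofReal (f r) := by
  have hq : (-1:ℝ) < -β := by linarith
  set H : ℝ × ℝ → ENNReal := fun z =>
    ENNReal.ofReal ((t - z.1)^p) * ENNReal.ofReal ((z.1 - z.2)^(-β)) * ENNReal.ofReal (f z.2)
      * ({w : ℝ × ℝ | w.2 < w.1}.indicator 1 z) with hH
  have measH : Measurable H := by
    refine Measurable.mul ?_ ?_
    · exact (((measurable_const.sub measurable_fst).pow measurable_const).ennreal_ofReal.mul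
        (((measurable_fst.sub measurable_snd).pow measurable_const).ennreal_ofReal)).mul
        ((hf.comp measurable_snd).ennreal_ofReal)
    · exact measurable_const.indicator (measurableSet_lt measurable_snd measurable_fst)
  have lhs_eq : ∀ s ∈ Set.Ioo (0:ℝ) t,
      ENNReal.ofReal ((t-s)^p) *
        ∫⁻ r in Set.Ioo 0 s, ENNReal.ofReal ((s-r)^(-β)) * ENNReal.ofReal (f r)
      = ∫⁻ r in Set.Ioo 0 t, H (s, r) := by
    intro s hs
    have hind : ∀ r : ℝ, H (s, r) = (Set.Iio s).indicator
        (fun r => ENNReal.ofReal ((t-s)^p) * ENNReal.ofReal ((s-r)^(-β))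
          * ENNReal.ofReal (f r)) r := by
      intro r
      by_cases hr : r < s
      · simp [hH, Set.indicator_of_mem, hr, Set.mem_Iio.mpr hr,
          Set.indicator_of_mem (Set.mem_Iio.mpr hr)]
      · simp [hH, hr, Set.indicator_of_notMem, Set.mem_Iio, Set.mem_setOf_eq]
    simp_rw [hind]
    rw [lintegral_indicator measurableSet_Iio,
      Measure.restrict_restrict measurableSet_Iio,
      show Set.Iio s ∩ Set.Ioo 0 t = Set.Ioo 0 s from by
        ext x; simp only [Set.mem_inter_iff, Set.mem_Iio, Set.mem_Ioo]
        exact ⟨fun ⟨h1, h2, _⟩ => ⟨h2, h1⟩, fun ⟨h1, h2⟩ => ⟨h2, h1, h2.trans hs.2⟩⟩]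
    rw [← lintegral_const_mul' _ _ ENNReal.ofReal_ne_top]
    congr 1 with r
    ring
  have rhs_eq : ∀ r ∈ Set.Ioo (0:ℝ) t,
      (∫⁻ s in Set.Ioo 0 t, H (s, r))
      = ENNReal.ofReal ((t-r)^(p+1-β) * henryB p (-β)) * ENNReal.ofReal (f r) := by
    intro r hr
    have hind : ∀ s : ℝ, H (s, r) = (Set.Ioi r).indicator
        (fun s => ENNReal.ofReal ((t-s)^p) * ENNReal.ofReal ((s-r)^(-β))
          * ENNReal.ofReal (f r)) s := by
      intro s
      by_cases hrs : r < s
      · simp [hH, Set.indicator_of_mem, Set.mem_Ioi.mpr hrs, hrs]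
      · simp [hH, hrs, Set.mem_Ioi, Set.mem_setOf_eq]
    simp_rw [hind]
    rw [lintegral_indicator measurableSet_Ioi,
      Measure.restrict_restrict measurableSet_Ioi,
      show Set.Ioi r ∩ Set.Ioo 0 t = Set.Ioo r t from by
        ext x; simp only [Set.mem_inter_iff, Set.mem_Ioi, Set.mem_Ioo]
        exact ⟨fun ⟨h1, _, h3⟩ => ⟨h1, h3⟩, fun ⟨h1, h2⟩ => ⟨h1, hr.1.trans h1, h2⟩⟩]
    have : ∀ s : ℝ, ENNReal.ofReal ((t-s)^p) * ENNReal.ofReal ((s-r)^(-β))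
          * ENNReal.ofReal (f r)
        = ENNReal.ofReal (f r) * (ENNReal.ofReal ((t-s)^p) * ENNReal.ofReal ((s-r)^(-β))) := by
      intro s; ring
    simp_rw [this]
    rw [lintegral_const_mul' _ _ ENNReal.ofReal_ne_top,
      henry_betaLin hp hq hr.2, show p + (-β) + 1 = p + 1 - β by ring]
    ring
  calc ∫⁻ s in Set.Ioo 0 t, ENNReal.ofReal ((t-s)^p) *
        ∫⁻ r in Set.Ioo 0 s, ENNReal.ofReal ((s-r)^(-β)) * ENNReal.ofReal (f r)
      = ∫⁻ s in Set.Ioo 0 t, ∫⁻ r in Set.Ioo 0 t, H (s, r) :=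
        setLIntegral_congr_fun measurableSet_Ioo lhs_eq
    _ = ∫⁻ r in Set.Ioo 0 t, ∫⁻ s in Set.Ioo 0 t, H (s, r) := by
        apply lintegral_lintegral_swap
        exact measH.aemeasurable
    _ = ∫⁻ r in Set.Ioo 0 t, ENNReal.ofReal ((t-r)^(p+1-β) * henryB p (-β))
          * ENNReal.ofReal (f r) :=
        setLIntegral_congr_fun measurableSet_Ioo rhs_eq
    _ = ENNReal.ofReal (henryB p (-β)) *
        ∫⁻ r in Set.Ioo 0 t, ENNReal.ofReal ((t-r)^(p+1-β)) * ENNReal.ofReal (f r) := by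
        rw [← lintegral_const_mul' _ _ ENNReal.ofReal_ne_top]
        refine setLIntegral_congr_fun measurableSet_Ioo
          (fun r hr => ?_)
        rw [ENNReal.ofReal_mul (rpow_nonneg (by linarith [hr.2]) _)]
        ring



def henryGam (β : ℝ) (n : ℕ) : ℝ := n * (1-β) - β

noncomputable def henryC (β a₂ : ℝ) : ℕ → ℝ
  | 0 => a₂
  | n+1 => henryC β a₂ n * (a₂ * henryB (henryGam β n) (-β))

section facts
variable {α β a₂ : ℝ} (hα0 : 0 ≤ α) (hα1 : α < 1) (hβ0 : 0 ≤ β) (hβ1 : β < 1) (ha₂ : 0 < a₂)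
include hβ0 hβ1

lemma henryGam_lb (n : ℕ) : -β ≤ henryGam β n := by
  have : (0:ℝ) ≤ n * (1-β) := mul_nonneg n.cast_nonneg (by linarith)
  simp only [henryGam]; linarith

lemma henryGam_gt (n : ℕ) : -1 < henryGam β n :=
  lt_of_lt_of_le (by linarith) (henryGam_lb hβ0 hβ1 n)

lemma henryB_le_base {q : ℝ} (hq : -1 < q) (n : ℕ) :
    henryB (henryGam β n) q ≤ henryB (-β) q := by
  refine setIntegral_mono_on
    (henryB_integrableOn (henryGam_gt hβ0 hβ1 n) hq)
    (henryB_integrableOn (by linarith : (-1:ℝ) < -β) hq)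
    measurableSet_Ioo fun u hu => ?_
  refine mul_le_mul_of_nonneg_right ?_ (rpow_nonneg hu.1.le _)
  exact rpow_le_rpow_of_exponent_ge (by linarith [hu.2]) (by linarith [hu.1])
    (henryGam_lb hβ0 hβ1 n)

lemma henryB_tendsto_zero : Tendsto (fun n : ℕ => henryB (henryGam β n) (-β)) atTop (nhds 0) := by
  have hq : (-1:ℝ) < -β := by linarith
  have hγtop : Tendsto (fun n : ℕ => henryGam β n) atTop atTop := by
    simp only [henryGam]
    exact tendsto_atTop_add_const_right _ (-β)
      (Tendsto.atTop_mul_const (by linarith) tendsto_natCast_atTop_atTop)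
  have key : Tendsto (fun n : ℕ => ∫ u in Set.Ioo (0:ℝ) 1, (1-u)^(henryGam β n) * u^(-β))
      atTop (nhds (∫ _u in Set.Ioo (0:ℝ) 1, (0:ℝ))) := by
    refine tendsto_integral_of_dominated_convergence
      (fun u => (1-u)^(-β) * u^(-β)) (fun n => (henry_meas _ _).aestronglyMeasurable)
      (henryB_integrableOn hq hq) (fun n => ?_) ?_
    · refine ae_restrict_of_forall_mem measurableSet_Ioo fun u hu => ?_
      have h1 : 0 < 1 - u := by linarith [hu.2]
      rw [Real.norm_eq_abs, abs_of_nonneg (mul_nonneg (rpow_nonneg h1.le _) (rpow_nonneg hu.1.le _))]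
      exact mul_le_mul_of_nonneg_right
        (rpow_le_rpow_of_exponent_ge h1 (by linarith [hu.1]) (henryGam_lb hβ0 hβ1 n))
        (rpow_nonneg hu.1.le _)
    · refine ae_restrict_of_forall_mem measurableSet_Ioo fun u hu => ?_
      have h1 : 0 < 1 - u := by linarith [hu.2]
      have htd : Tendsto (fun n : ℕ => (1-u) ^ (henryGam β n)) atTop (nhds 0) :=
        (tendsto_rpow_atTop_of_base_lt_one (1-u) (by linarith [hu.1]) (by linarith [hu.1])).comp hγtop
      simpa using htd.mul_const (u^(-β))
  simpa [henryB] using key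

include ha₂

lemma henryC_nonneg (n : ℕ) : 0 ≤ henryC β a₂ n := by
  induction n with
  | zero => exact ha₂.le
  | succ n ih => exact mul_nonneg ih (mul_nonneg ha₂.le (henryB_nonneg _ _))

lemma henryC_summable : Summable (henryC β a₂) := by
  have h12 : (1:ℝ)/2 < 1 := by norm_num
  refine summable_of_ratio_norm_eventually_le h12 ?_
  have hev : ∀ᶠ n : ℕ in atTop, a₂ * henryB (henryGam β n) (-β) ≤ 1/2 := by
    have := (henryB_tendsto_zero hβ0 hβ1).const_mul a₂
    rw [mul_zero] at this
    exact this.eventually_le_const (by norm_num)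
  filter_upwards [hev] with n hn
  rw [Real.norm_eq_abs, Real.norm_eq_abs,
    abs_of_nonneg (henryC_nonneg hβ0 hβ1 ha₂ (n+1)),
    abs_of_nonneg (henryC_nonneg hβ0 hβ1 ha₂ n)]
  show henryC β a₂ n * (a₂ * henryB (henryGam β n) (-β)) ≤ 1/2 * henryC β a₂ n
  rw [mul_comm (1/2 : ℝ)]
  exact mul_le_mul_of_nonneg_left hn (henryC_nonneg hβ0 hβ1 ha₂ n)

end facts


noncomputable def henryD (α β a₂ : ℝ) (n : ℕ) : ℝ :=
  1 + ∑ k ∈ Finset.range n, henryC β a₂ k * henryB (henryGam β k) (-α)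

/-- Henry's singular Gronwall inequality: an integrable nonnegative function satisfying an
integral inequality with weakly singular kernel `(t-s)^{-β}` and singular forcing
`a₁ t^{-α}` is bounded by a constant multiple of the forcing, with the constant depending
only on `α`, `β`, `a₂`. -/
theorem stmt6 (α β a₂ : ℝ) (hα : α ∈ Set.Ico (0 : ℝ) 1) (hβ : β ∈ Set.Ico (0 : ℝ) 1)
    (ha₂ : 0 < a₂) :
    ∃ C > 0, ∀ (f : ℝ → ℝ) (a₁ : ℝ), 0 < a₁ →
      Measurable f →
      (∀ t ∈ Set.Ioc (0 : ℝ) 1, 0 ≤ f t) →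
      IntegrableOn f (Set.Ioc 0 1) →
      (∀ t ∈ Set.Ioc (0 : ℝ) 1,
        f t ≤ a₁ * t ^ (-α) + a₂ * ∫ s in Set.Ioo (0 : ℝ) t, (t - s) ^ (-β) * f s) →
      ∀ t ∈ Set.Ioc (0 : ℝ) 1, f t ≤ C * a₁ * t ^ (-α) := by
  obtain ⟨hα0, hα1⟩ := hα
  obtain ⟨hβ0, hβ1⟩ := hβ
  have hqα : (-1:ℝ) < -α := by linarith
  have hqβ : (-1:ℝ) < -β := by linarith
  have hsum : Summable (henryC β a₂) := henryC_summable hβ0 hβ1 ha₂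
  have hcnn : ∀ n, 0 ≤ henryC β a₂ n := henryC_nonneg hβ0 hβ1 ha₂
  set Mα : ℝ := henryB (-β) (-α) with hMα
  have hMα0 : 0 ≤ Mα := henryB_nonneg _ _
  set D : ℝ := 1 + Mα * ∑' n, henryC β a₂ n with hD
  have htsum0 : 0 ≤ ∑' n, henryC β a₂ n := tsum_nonneg hcnn
  have hD1 : (1:ℝ) ≤ D := by
    have : 0 ≤ Mα * ∑' n, henryC β a₂ n := mul_nonneg hMα0 htsum0
    simp only [hD]; linarith
  have hDle : ∀ n, henryD α β a₂ n ≤ D := by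
    intro n
    have h1 : ∑ k ∈ Finset.range n, henryC β a₂ k * henryB (henryGam β k) (-α)
        ≤ ∑ k ∈ Finset.range n, henryC β a₂ k * Mα := by
      refine Finset.sum_le_sum fun k _ => ?_
      exact mul_le_mul_of_nonneg_left (henryB_le_base hβ0 hβ1 hqα k) (hcnn k)
    have h2 : ∑ k ∈ Finset.range n, henryC β a₂ k * Mα
        ≤ (∑' k, henryC β a₂ k) * Mα := by
      rw [← Finset.sum_mul]
      exact mul_le_mul_of_nonneg_right
        (Summable.sum_le_tsum (Finset.range n) (fun k _ => hcnn k) hsum) hMα0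
    simp only [henryD, hD]
    rw [mul_comm Mα]
    linarith
  have hD0 : 0 < D := lt_of_lt_of_le one_pos hD1
  refine ⟨D, hD0, ?_⟩
  intro f a₁ ha₁ hf hf0 hfi hle
  -- base pointwise inequality in ℝ≥0∞
  have P : ∀ s ∈ Set.Ioc (0:ℝ) 1, ENNReal.ofReal (f s) ≤ ENNReal.ofReal (a₁ * s^(-α))
      + ENNReal.ofReal a₂ *
        ∫⁻ r in Set.Ioo 0 s, ENNReal.ofReal ((s-r)^(-β)) * ENNReal.ofReal (f r) := by
    intro s hs
    have hkerm : Measurable fun r => (s - r)^(-β) * f r :=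
      ((measurable_const.sub measurable_id).pow measurable_const).mul hf
    have hnn : ∀ r ∈ Set.Ioo (0:ℝ) s, 0 ≤ (s-r)^(-β) * f r := fun r hr =>
      mul_nonneg (rpow_nonneg (by linarith [hr.2]) _) (hf0 r ⟨hr.1, hr.2.le.trans hs.2⟩)
    have hnnae := ae_restrict_of_forall_mem (μ := volume) measurableSet_Ioo hnn
    have hsplit : ∀ᵐ r ∂(volume.restrict (Set.Ioo 0 s)),
        ENNReal.ofReal ((s-r)^(-β) * f r)
          = ENNReal.ofReal ((s-r)^(-β)) * ENNReal.ofReal (f r) :=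
      ae_restrict_of_forall_mem measurableSet_Ioo fun r hr =>
        ENNReal.ofReal_mul (rpow_nonneg (by linarith [hr.2]) _)
    by_cases hint : IntegrableOn (fun r => (s-r)^(-β) * f r) (Set.Ioo 0 s) volume
    · have h1 : ENNReal.ofReal (∫ r in Set.Ioo 0 s, (s-r)^(-β) * f r)
          = ∫⁻ r in Set.Ioo 0 s, ENNReal.ofReal ((s-r)^(-β)) * ENNReal.ofReal (f r) := by
        rw [ofReal_integral_eq_lintegral_ofReal hint hnnae]
        exact lintegral_congr_ae hsplit
      calc ENNReal.ofReal (f s)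
          ≤ ENNReal.ofReal (a₁ * s^(-α) + a₂ * ∫ r in Set.Ioo 0 s, (s-r)^(-β) * f r) :=
            ENNReal.ofReal_le_ofReal (hle s hs)
        _ ≤ ENNReal.ofReal (a₁ * s^(-α))
            + ENNReal.ofReal (a₂ * ∫ r in Set.Ioo 0 s, (s-r)^(-β) * f r) :=
            ENNReal.ofReal_add_le
        _ = _ := by rw [ENNReal.ofReal_mul ha₂.le, h1]
    · have htop : (∫⁻ r in Set.Ioo 0 s, ENNReal.ofReal ((s-r)^(-β)) * ENNReal.ofReal (f r)) = ⊤ := by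
        have hnfi : ¬ HasFiniteIntegral (fun r => (s-r)^(-β) * f r)
            (volume.restrict (Set.Ioo 0 s)) := by
          intro hcon
          exact hint ⟨hkerm.aestronglyMeasurable, hcon⟩
        rw [hasFiniteIntegral_iff_ofReal hnnae, not_lt, top_le_iff] at hnfi
        rw [← lintegral_congr_ae hsplit]
        exact hnfi
      rw [htop, ENNReal.mul_top (by simp only [ne_eq, ENNReal.ofReal_eq_zero, not_le]; linarith)]
      exact le_top
  -- the iterated inequality
  have S : ∀ n, ∀ t ∈ Set.Ioc (0:ℝ) 1,
      ENNReal.ofReal (f t) ≤ ENNReal.ofReal (a₁ * henryD α β a₂ n * t^(-α))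
        + ENNReal.ofReal (henryC β a₂ n) *
          ∫⁻ s in Set.Ioo 0 t, ENNReal.ofReal ((t-s)^(henryGam β n)) * ENNReal.ofReal (f s) := by
    intro n
    induction n with
    | zero =>
      intro t ht
      have e1 : henryGam β 0 = -β := by simp [henryGam]
      have e2 : henryD α β a₂ 0 = 1 := by simp [henryD]
      have e3 : henryC β a₂ 0 = a₂ := rfl
      rw [e1, e2, e3, mul_one]
      exact P t ht
    | succ n ih =>
      intro t ht
      have ht0 : 0 < t := ht.1
      have ht1 : t ≤ 1 := ht.2
      have hγ := henryGam_gt hβ0 hβ1 (β := β) n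
      have hγlb := henryGam_lb hβ0 hβ1 (β := β) n
      -- bound the remainder integral
      have step1 : (∫⁻ s in Set.Ioo 0 t, ENNReal.ofReal ((t-s)^(henryGam β n)) * ENNReal.ofReal (f s))
          ≤ ∫⁻ s in Set.Ioo 0 t, ENNReal.ofReal ((t-s)^(henryGam β n)) *
              (ENNReal.ofReal (a₁ * s^(-α)) + ENNReal.ofReal a₂ *
                ∫⁻ r in Set.Ioo 0 s, ENNReal.ofReal ((s-r)^(-β)) * ENNReal.ofReal (f r)) := by
        refine lintegral_mono_ae (ae_restrict_of_forall_mem measurableSet_Ioo fun s hs => ?_)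
        exact mul_le_mul_right (P s ⟨hs.1, hs.2.le.trans ht1⟩) _
      have step2 : (∫⁻ s in Set.Ioo 0 t, ENNReal.ofReal ((t-s)^(henryGam β n)) *
              (ENNReal.ofReal (a₁ * s^(-α)) + ENNReal.ofReal a₂ *
                ∫⁻ r in Set.Ioo 0 s, ENNReal.ofReal ((s-r)^(-β)) * ENNReal.ofReal (f r)))
          = (∫⁻ s in Set.Ioo 0 t, ENNReal.ofReal ((t-s)^(henryGam β n)) * ENNReal.ofReal (a₁ * s^(-α)))
            + ENNReal.ofReal a₂ * ∫⁻ s in Set.Ioo 0 t, ENNReal.ofReal ((t-s)^(henryGam β n)) *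
                ∫⁻ r in Set.Ioo 0 s, ENNReal.ofReal ((s-r)^(-β)) * ENNReal.ofReal (f r) := by
        have hmeas1 : Measurable fun s : ℝ =>
            ENNReal.ofReal ((t-s)^(henryGam β n)) * ENNReal.ofReal (a₁ * s^(-α)) :=
          ((measurable_const.sub measurable_id).pow measurable_const).ennreal_ofReal.mul
            ((measurable_const.mul (measurable_id.pow measurable_const)).ennreal_ofReal)
        rw [← lintegral_const_mul' _ _ ENNReal.ofReal_ne_top, ← lintegral_add_left hmeas1]
        congr 1 with s
        ring
      -- first term: beta integral
      have hbeta1 : (∫⁻ s in Set.Ioo 0 t, ENNReal.ofReal ((t-s)^(henryGam β n)) *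
            ENNReal.ofReal (a₁ * s^(-α)))
          ≤ ENNReal.ofReal (a₁ * (henryB (henryGam β n) (-α)) * t^(-α)) := by
        have hcongr : ∀ s ∈ Set.Ioo (0:ℝ) t,
            ENNReal.ofReal ((t-s)^(henryGam β n)) * ENNReal.ofReal (a₁ * s^(-α))
            = ENNReal.ofReal a₁ * (ENNReal.ofReal ((t-s)^(henryGam β n)) *
                ENNReal.ofReal ((s-(0:ℝ))^(-α))) := by
          intro s hs
          rw [ENNReal.ofReal_mul ha₁.le, sub_zero]
          ring
        rw [setLIntegral_congr_fun measurableSet_Ioo hcongr,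
          lintegral_const_mul' _ _ ENNReal.ofReal_ne_top,
          henry_betaLin hγ hqα ht0, sub_zero]
        rw [← ENNReal.ofReal_mul ha₁.le]
        refine ENNReal.ofReal_le_ofReal ?_
        have hexp : t ^ (henryGam β n + (-α) + 1) ≤ t ^ (-α) :=
          rpow_le_rpow_of_exponent_ge ht0 ht1 (by linarith)
        calc a₁ * (t ^ (henryGam β n + (-α) + 1) * henryB (henryGam β n) (-α))
            ≤ a₁ * (t ^ (-α) * henryB (henryGam β n) (-α)) := by
              refine mul_le_mul_of_nonneg_left
                (mul_le_mul_of_nonneg_right hexp (henryB_nonneg _ _)) ha₁.le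
          _ = a₁ * henryB (henryGam β n) (-α) * t ^ (-α) := by ring
      -- second term: Fubini
      have hfub := henry_fubini hβ1 hf hγ ht0
      have hγ1 : henryGam β n + 1 - β = henryGam β (n+1) := by
        simp only [henryGam]; push_cast; ring
      rw [hγ1] at hfub
      -- assemble
      refine le_trans (ih t ht) ?_
      refine le_trans (add_le_add_right (mul_le_mul_right
        (le_trans step1 (le_of_eq step2)) _) _) ?_
      rw [mul_add]
      have hterm1 : ENNReal.ofReal (a₁ * henryD α β a₂ n * t^(-α))
            + ENNReal.ofReal (henryC β a₂ n) *
              (∫⁻ s in Set.Ioo 0 t, ENNReal.ofReal ((t-s)^(henryGam β n)) *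
                ENNReal.ofReal (a₁ * s^(-α)))
          ≤ ENNReal.ofReal (a₁ * henryD α β a₂ (n+1) * t^(-α)) := by
        refine le_trans (add_le_add_right (mul_le_mul_right hbeta1 _) _) ?_
        have hDnn : 0 ≤ henryD α β a₂ n := by
          have : 0 ≤ ∑ k ∈ Finset.range n, henryC β a₂ k * henryB (henryGam β k) (-α) :=
            Finset.sum_nonneg fun k _ => mul_nonneg (hcnn k) (henryB_nonneg _ _)
          simp only [henryD]; linarith
        rw [← ENNReal.ofReal_mul (hcnn n)]
        rw [← ENNReal.ofReal_add
          (mul_nonneg (mul_nonneg ha₁.le hDnn) (rpow_nonneg ht0.le _))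
          (mul_nonneg (hcnn n) (mul_nonneg (mul_nonneg ha₁.le (henryB_nonneg _ _)) (rpow_nonneg ht0.le _)))]
        refine ENNReal.ofReal_le_ofReal (le_of_eq ?_)
        simp only [henryD, Finset.sum_range_succ]
        ring
      have hterm2 : ENNReal.ofReal (henryC β a₂ n) * (ENNReal.ofReal a₂ *
            ∫⁻ s in Set.Ioo 0 t, ENNReal.ofReal ((t-s)^(henryGam β n)) *
              ∫⁻ r in Set.Ioo 0 s, ENNReal.ofReal ((s-r)^(-β)) * ENNReal.ofReal (f r))
          = ENNReal.ofReal (henryC β a₂ (n+1)) *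
            ∫⁻ s in Set.Ioo 0 t, ENNReal.ofReal ((t-s)^(henryGam β (n+1))) * ENNReal.ofReal (f s) := by
        rw [hfub]
        rw [show henryC β a₂ (n+1) = henryC β a₂ n * (a₂ * henryB (henryGam β n) (-β)) from rfl]
        rw [ENNReal.ofReal_mul (hcnn n), ENNReal.ofReal_mul ha₂.le]
        ring
      calc ENNReal.ofReal (a₁ * henryD α β a₂ n * t^(-α))
            + (ENNReal.ofReal (henryC β a₂ n) * (∫⁻ s in Set.Ioo 0 t,
                ENNReal.ofReal ((t-s)^(henryGam β n)) * ENNReal.ofReal (a₁ * s^(-α)))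
              + ENNReal.ofReal (henryC β a₂ n) * (ENNReal.ofReal a₂ *
                ∫⁻ s in Set.Ioo 0 t, ENNReal.ofReal ((t-s)^(henryGam β n)) *
                  ∫⁻ r in Set.Ioo 0 s, ENNReal.ofReal ((s-r)^(-β)) * ENNReal.ofReal (f r)))
          = (ENNReal.ofReal (a₁ * henryD α β a₂ n * t^(-α))
              + ENNReal.ofReal (henryC β a₂ n) * (∫⁻ s in Set.Ioo 0 t,
                ENNReal.ofReal ((t-s)^(henryGam β n)) * ENNReal.ofReal (a₁ * s^(-α))))
            + ENNReal.ofReal (henryC β a₂ n) * (ENNReal.ofReal a₂ *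
                ∫⁻ s in Set.Ioo 0 t, ENNReal.ofReal ((t-s)^(henryGam β n)) *
                  ∫⁻ r in Set.Ioo 0 s, ENNReal.ofReal ((s-r)^(-β)) * ENNReal.ofReal (f r)) := by
            ring
        _ ≤ ENNReal.ofReal (a₁ * henryD α β a₂ (n+1) * t^(-α))
            + ENNReal.ofReal (henryC β a₂ (n+1)) *
              ∫⁻ s in Set.Ioo 0 t, ENNReal.ofReal ((t-s)^(henryGam β (n+1))) * ENNReal.ofReal (f s) := by
            rw [← hterm2]
            exact add_le_add_left hterm1 _
  -- final limiting argument
  intro t ht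
  have ht0 : 0 < t := ht.1
  have ht1 : t ≤ 1 := ht.2
  set F0 : ℝ := ∫ s in Set.Ioc (0:ℝ) 1, f s with hF0
  have hF00 : 0 ≤ F0 := setIntegral_nonneg measurableSet_Ioc hf0
  have hlif : (∫⁻ s in Set.Ioo 0 t, ENNReal.ofReal (f s)) ≤ ENNReal.ofReal F0 := by
    have h1 : (∫⁻ s in Set.Ioo 0 t, ENNReal.ofReal (f s))
        ≤ ∫⁻ s in Set.Ioc (0:ℝ) 1, ENNReal.ofReal (f s) :=
      lintegral_mono_set (fun s hs => ⟨hs.1, hs.2.le.trans ht1⟩)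
    rw [hF0, ofReal_integral_eq_lintegral_ofReal hfi
      (ae_restrict_of_forall_mem measurableSet_Ioc hf0)]
    exact h1
  set N : ℕ := ⌈β / (1-β)⌉₊ with hN
  have hreal : ∀ n ≥ N, f t ≤ a₁ * D * t^(-α) + henryC β a₂ n * F0 := by
    intro n hn
    have hγn0 : 0 ≤ henryGam β n := by
      have h1 : β / (1-β) ≤ (N:ℝ) := Nat.le_ceil _
      have h2 : (N:ℝ) ≤ (n:ℝ) := Nat.cast_le.mpr hn
      have h3 : β / (1-β) ≤ (n:ℝ) := le_trans h1 h2
      rw [div_le_iff₀ (by linarith : (0:ℝ) < 1 - β)] at h3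
      simp only [henryGam]; linarith
    have hS := S n t ht
    have hker1 : (∫⁻ s in Set.Ioo 0 t, ENNReal.ofReal ((t-s)^(henryGam β n)) * ENNReal.ofReal (f s))
        ≤ ENNReal.ofReal F0 := by
      refine le_trans (lintegral_mono_ae
        (ae_restrict_of_forall_mem measurableSet_Ioo fun s hs => ?_)) hlif
      calc ENNReal.ofReal ((t-s)^(henryGam β n)) * ENNReal.ofReal (f s)
          ≤ 1 * ENNReal.ofReal (f s) := by
            refine mul_le_mul_left ?_ _
            rw [show (1:ENNReal) = ENNReal.ofReal 1 by simp]
            exact ENNReal.ofReal_le_ofReal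
              (rpow_le_one (by linarith [hs.2]) (by linarith [hs.1, hs.2]) hγn0)
        _ = ENNReal.ofReal (f s) := one_mul _
    have hS2 : ENNReal.ofReal (f t) ≤ ENNReal.ofReal (a₁ * D * t^(-α) + henryC β a₂ n * F0) := by
      refine le_trans hS ?_
      have haD : 0 ≤ a₁ * D * t^(-α) := mul_nonneg (mul_nonneg ha₁.le hD0.le) (rpow_nonneg ht0.le _)
      rw [ENNReal.ofReal_add haD (mul_nonneg (hcnn n) hF00)]
      refine add_le_add ?_ ?_
      · refine ENNReal.ofReal_le_ofReal ?_
        have := hDle n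
        have h4 : 0 < t ^ (-α) := rpow_pos_of_pos ht0 _
        nlinarith [mul_le_mul_of_nonneg_right (hDle n) h4.le]
      · rw [ENNReal.ofReal_mul (hcnn n)]
        exact mul_le_mul_right hker1 _
    rw [ENNReal.ofReal_le_ofReal_iff (by
      have haD : 0 ≤ a₁ * D * t^(-α) := mul_nonneg (mul_nonneg ha₁.le hD0.le) (rpow_nonneg ht0.le _)
      have := mul_nonneg (hcnn n) hF00
      linarith)] at hS2
    exact hS2
  have htd : Tendsto (fun n => a₁ * D * t^(-α) + henryC β a₂ n * F0) atTop
      (nhds (a₁ * D * t^(-α))) := by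
    have h1 : Tendsto (fun n => henryC β a₂ n * F0) atTop (nhds 0) := by
      simpa using (hsum.tendsto_atTop_zero).mul_const F0
    simpa using tendsto_const_nhds.add h1
  have := ge_of_tendsto htd (eventually_atTop.mpr ⟨N, hreal⟩)
  calc f t ≤ a₁ * D * t^(-α) := this
    _ = D * a₁ * t^(-α) := by ring
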